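/- arXiv:2312.08749 — 2 statements merged into one kernel-verified Lean document; each statement's English description precedes it below -/
import Mathlib

section
/- Let X be a real-valued square-integrable random variable with mean μ and variance ν. Then for all real numbers β and θ, E[ exp( ψ( β·(X − θ) ) ) ] ≤ exp( β·(μ − θ) + (β²/2)·(ν + (μ − θ)²) ). -/
open MeasureTheory ProbabilityTheory

/-- The Catoni influence function `ψ(x) = log(1 + x + x²/2)`. -/
noncomputable def psi (x : ℝ) : ℝ := Real.log (1 + x + x ^ 2 / 2)

/-- Upper exponential-moment bound: for a square-integrable real random variable `X`
with mean `μ` and variance `ν`, and any reals `β, θ`,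
`E[exp(ψ(β(X − θ)))] ≤ exp(β(μ − θ) + (β²/2)(ν + (μ − θ)²))`. -/
theorem catoni_exp_moment_upper
    {Ω : Type*} [MeasurableSpace Ω] (P : Measure Ω) [IsProbabilityMeasure P]
    (X : Ω → ℝ) (μ ν : ℝ)
    (hX : MemLp X 2 P)
    (hmean : ∫ ω, X ω ∂P = μ)
    (hvar : variance X P = ν)
    (β θ : ℝ) :
    ∫ ω, Real.exp (psi (β * (X ω - θ))) ∂P ≤
      Real.exp (β * (μ - θ) + β ^ 2 / 2 * (ν + (μ - θ) ^ 2)) := by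
  have hY : MemLp (fun ω => X ω - θ) 2 P := hX.sub (memLp_const θ)
  have hint1 : Integrable (fun ω => X ω - θ) P := hY.integrable one_le_two
  have hint2 : Integrable (fun ω => (X ω - θ) ^ 2) P := hY.integrable_sq
  have hpt : ∀ ω, Real.exp (psi (β * (X ω - θ))) =
      1 + β * (X ω - θ) + β ^ 2 * (X ω - θ) ^ 2 / 2 := by
    intro ω
    have hpos : 0 < 1 + β * (X ω - θ) + (β * (X ω - θ)) ^ 2 / 2 := by nlinarith [sq_nonneg (β * (X ω - θ) + 1)]
    rw [psi, Real.exp_log hpos]; ring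
  have hI1 : ∫ ω, (X ω - θ) ∂P = μ - θ := by
    rw [integral_sub (hX.integrable one_le_two) (integrable_const θ), hmean,
      integral_const, probReal_univ]
    simp
  have hI2 : ∫ ω, (X ω - θ) ^ 2 ∂P = ν + (μ - θ) ^ 2 := by
    have hv := variance_eq_integral hX.aestronglyMeasurable.aemeasurable
    rw [hvar, hmean] at hv
    have : ∀ ω, (X ω - θ) ^ 2 = (X ω - μ) ^ 2 + 2 * (μ - θ) * (X ω - μ) + (μ - θ) ^ 2 := by
      intro ω; ring
    rw [integral_congr_ae (Filter.Eventually.of_forall this)]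
    have hXmu : MemLp (fun ω => X ω - μ) 2 P := hX.sub (memLp_const μ)
    have h1 : Integrable (fun ω => (X ω - μ) ^ 2) P := hXmu.integrable_sq
    have h2 : Integrable (fun ω => 2 * (μ - θ) * (X ω - μ)) P :=
      (hXmu.integrable one_le_two).const_mul _
    have hImu : ∫ ω, (X ω - μ) ∂P = 0 := by
      rw [integral_sub (hX.integrable one_le_two) (integrable_const μ), hmean,
        integral_const, probReal_univ]
      simp
    have h12 : Integrable (fun ω => (X ω - μ) ^ 2 + 2 * (μ - θ) * (X ω - μ)) P := h1.add h2
    rw [integral_add h12 (integrable_const _), integral_add h1 h2,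
      integral_const_mul, hImu, integral_const, probReal_univ]
    have : ∫ ω, (X ω - μ) ^ 2 ∂P = ν := by
      rw [hv]
    rw [this]; simp
  calc ∫ ω, Real.exp (psi (β * (X ω - θ))) ∂P
      = ∫ ω, (1 + β * (X ω - θ) + β ^ 2 * (X ω - θ) ^ 2 / 2) ∂P := by
        exact integral_congr_ae (Filter.Eventually.of_forall hpt)
    _ = 1 + β * (μ - θ) + β ^ 2 * (ν + (μ - θ) ^ 2) / 2 := by
        have hA : Integrable (fun ω => 1 + β * (X ω - θ)) P :=
          (integrable_const (1:ℝ)).add (hint1.const_mul β)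
        have hB : Integrable (fun ω => β ^ 2 * (X ω - θ) ^ 2 / 2) P :=
          (hint2.const_mul (β^2)).div_const 2
        rw [integral_add hA hB,
          integral_add (integrable_const (1:ℝ)) (hint1.const_mul β),
          integral_const, probReal_univ, integral_const_mul, hI1, integral_div,
          integral_const_mul, hI2]
        simp
    _ ≤ Real.exp (β * (μ - θ) + β ^ 2 / 2 * (ν + (μ - θ) ^ 2)) := by
        have := Real.add_one_le_exp (β * (μ - θ) + β ^ 2 / 2 * (ν + (μ - θ) ^ 2))
        linarith
end

section
/- Let X be a real-valued square-integrable random variable with mean μ and variance ν. Then for all real numbers β and θ, E[ exp( −ψ( β·(X − θ) ) ) ] ≤ exp( −β·(μ − θ) + (β²/2)·(ν + (μ − θ)²) ). -/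
open MeasureTheory ProbabilityTheory

lemma psi_pos_arg (y : ℝ) : 0 < 1 + y + y ^ 2 / 2 := by nlinarith [sq_nonneg (y + 1)]

lemma exp_neg_psi_le (y : ℝ) : Real.exp (-psi y) ≤ 1 - y + y ^ 2 / 2 := by
  have h := psi_pos_arg y
  rw [psi, Real.exp_neg, Real.exp_log h]
  rw [inv_le_iff_one_le_mul₀ h]
  nlinarith [sq_nonneg (y ^ 2)]

lemma exp_neg_psi_pos (y : ℝ) : 0 < Real.exp (-psi y) := Real.exp_pos _

/-- Lower exponential-moment bound: for a square-integrable real random variable `X`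
with mean `μ` and variance `ν`, and any reals `β, θ`,
`E[exp(−ψ(β(X − θ)))] ≤ exp(−β(μ − θ) + (β²/2)(ν + (μ − θ)²))`. -/
theorem catoni_exp_moment_lower
    {Ω : Type*} [MeasurableSpace Ω] (P : Measure Ω) [IsProbabilityMeasure P]
    (X : Ω → ℝ) (μ ν : ℝ)
    (hX : MemLp X 2 P)
    (hmean : ∫ ω, X ω ∂P = μ)
    (hvar : variance X P = ν)
    (β θ : ℝ) :
    ∫ ω, Real.exp (-psi (β * (X ω - θ))) ∂P ≤
      Real.exp (-(β * (μ - θ)) + β ^ 2 / 2 * (ν + (μ - θ) ^ 2)) := by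
  have hXi : Integrable X P := hX.integrable (by norm_num)
  have hXsq : Integrable (fun ω => X ω ^ 2) P := hX.integrable_sq
  have hg : Integrable (fun ω => 1 - β * (X ω - θ) + (β * (X ω - θ)) ^ 2 / 2) P := by
    have : (fun ω => 1 - β * (X ω - θ) + (β * (X ω - θ)) ^ 2 / 2)
        = fun ω => (β ^ 2 / 2) * X ω ^ 2 + ((-β - β ^ 2 * θ) * X ω
            + (1 + β * θ + β ^ 2 * θ ^ 2 / 2)) := by
      funext ω; ring
    rw [this]
    exact ((hXsq.const_mul _).add ((hXi.const_mul _).add (integrable_const _)))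
  have hf : Integrable (fun ω => Real.exp (-psi (β * (X ω - θ)))) P := by
    refine Integrable.mono' hg ?_ ?_
    · have hm : Measurable (fun y : ℝ => Real.exp (-psi y)) := by
        unfold psi
        exact Real.measurable_exp.comp (Real.measurable_log.comp ((measurable_const.add measurable_id).add ((measurable_id.pow_const 2).div_const 2))).neg
      have h1 : AEMeasurable (fun ω => β * (X ω - θ)) P :=
        ((hX.aestronglyMeasurable.aemeasurable.sub aemeasurable_const).const_mul β)
      exact (hm.comp_aemeasurable h1).aestronglyMeasurable
    · filter_upwards with ω
      rw [Real.norm_eq_abs, abs_of_pos (Real.exp_pos _)]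
      exact exp_neg_psi_le _
  have step1 : ∫ ω, Real.exp (-psi (β * (X ω - θ))) ∂P
      ≤ ∫ ω, (1 - β * (X ω - θ) + (β * (X ω - θ)) ^ 2 / 2) ∂P :=
    integral_mono hf hg fun ω => exp_neg_psi_le _
  have hXsqval : ∫ ω, X ω ^ 2 ∂P = ν + μ ^ 2 := by
    have := variance_eq_sub hX
    rw [hvar, hmean] at this
    simp only [Pi.pow_apply] at this
    linarith
  have step2 : ∫ ω, (1 - β * (X ω - θ) + (β * (X ω - θ)) ^ 2 / 2) ∂P
      = 1 + (-(β * (μ - θ)) + β ^ 2 / 2 * (ν + (μ - θ) ^ 2)) := by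
    have heq : (fun ω => 1 - β * (X ω - θ) + (β * (X ω - θ)) ^ 2 / 2)
        = fun ω => (β ^ 2 / 2) * X ω ^ 2 + ((-β - β ^ 2 * θ) * X ω
            + (1 + β * θ + β ^ 2 * θ ^ 2 / 2)) := by
      funext ω; ring
    have g2 : Integrable (fun ω => (-β - β ^ 2 * θ) * X ω + (1 + β * θ + β ^ 2 * θ ^ 2 / 2)) P :=
      (hXi.const_mul _).add (integrable_const _)
    rw [heq, integral_add (hXsq.const_mul _) g2,
      integral_add (hXi.const_mul _) (integrable_const _),
      MeasureTheory.integral_const_mul, MeasureTheory.integral_const_mul, hXsqval, hmean, integral_const]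
    simp
    ring
  calc ∫ ω, Real.exp (-psi (β * (X ω - θ))) ∂P
      ≤ 1 + (-(β * (μ - θ)) + β ^ 2 / 2 * (ν + (μ - θ) ^ 2)) := by rw [← step2]; exact step1
    _ ≤ Real.exp (-(β * (μ - θ)) + β ^ 2 / 2 * (ν + (μ - θ) ^ 2)) := by
        have := Real.add_one_le_exp (-(β * (μ - θ)) + β ^ 2 / 2 * (ν + (μ - θ) ^ 2))
        linarith
end
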